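/- arXiv:1808.02359 — 2 statements merged into one kernel-verified Lean document; each statement's English description precedes it below -/
import Mathlib

section
/- Let G be a connected graph on n vertices, x a vertex of G with exactly three neighbors, y and z two distinct neighbors of x, and c ≥ 0 an integer; let G' be the associated terminal-augmented graph with terminals s and t. Then G has a Hamiltonian cycle if and only if G' contains an st-path P with |V(P)| ≥ n + 2. -/
open SimpleGraph

/-- The open neighborhood of a vertex set `S`: vertices outside `S` adjacent to some
vertex of `S`. -/
def openNbhd {V : Type*} (G : SimpleGraph V) (S : Set V) : Set V :=
  {v | v ∉ S ∧ ∃ w ∈ S, G.Adj v w}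

/-- The terminal-augmented graph `G'` of `(G, x, y, z, c)`: a new vertex `s`
(modelled as `Sum.inr (Sum.inl ())`) adjacent exactly to `x`, a new vertex `t`
(modelled as `Sum.inr (Sum.inr (Sum.inl ()))`) adjacent exactly to `y` and `z`,
and `c` new vertices (the set `Z`, modelled as `Sum.inr (Sum.inr (Sum.inr i))`)
each adjacent exactly to `s`. -/
def termAug {V : Type*} (G : SimpleGraph V) (x y z : V) (c : ℕ) :
    SimpleGraph (V ⊕ (Unit ⊕ Unit ⊕ Fin c)) :=
  SimpleGraph.fromRel (fun a b =>
    match a, b with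
    | Sum.inl v, Sum.inl w => G.Adj v w
    | Sum.inl v, Sum.inr (Sum.inl _) => v = x
    | Sum.inl v, Sum.inr (Sum.inr (Sum.inl _)) => v = y ∨ v = z
    | Sum.inr (Sum.inl _), Sum.inr (Sum.inr (Sum.inr _)) => True
    | _, _ => False)

/-- The terminal `s` of the terminal-augmented graph. -/
def sVert (V : Type*) (c : ℕ) : V ⊕ (Unit ⊕ Unit ⊕ Fin c) := Sum.inr (Sum.inl ())

/-- The terminal `t` of the terminal-augmented graph. -/
def tVert (V : Type*) (c : ℕ) : V ⊕ (Unit ⊕ Unit ⊕ Fin c) := Sum.inr (Sum.inr (Sum.inl ()))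

/-- `G` has a Hamiltonian cycle. -/
def HasHamiltonianCycle {V : Type*} [DecidableEq V] (G : SimpleGraph V) : Prop :=
  ∃ (v : V) (p : G.Walk v v), p.IsHamiltonianCycle

section Aux

set_option linter.unusedSectionVars false

variable {V : Type*} {G : SimpleGraph V} {x y z : V} {c : ℕ}

lemma adj_inl_inl {v w : V} :
    (termAug G x y z c).Adj (Sum.inl v) (Sum.inl w) ↔ G.Adj v w := by
  unfold termAug
  rw [SimpleGraph.fromRel_adj]
  constructor
  · rintro ⟨-, h | h⟩
    · exact h
    · exact h.symm
  · intro h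
    exact ⟨by simp [h.ne], Or.inl h⟩

lemma adj_s_iff {u : V ⊕ (Unit ⊕ Unit ⊕ Fin c)} :
    (termAug G x y z c).Adj (sVert V c) u ↔
      (u = Sum.inl x ∨ ∃ i, u = Sum.inr (Sum.inr (Sum.inr i))) := by
  unfold termAug sVert
  rw [SimpleGraph.fromRel_adj]
  rcases u with v | (⟨⟩ | ⟨⟩ | i) <;> simp [eq_comm]

lemma adj_t_iff {u : V ⊕ (Unit ⊕ Unit ⊕ Fin c)} :
    (termAug G x y z c).Adj (tVert V c) u ↔ (u = Sum.inl y ∨ u = Sum.inl z) := by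
  unfold termAug tVert
  rw [SimpleGraph.fromRel_adj]
  rcases u with v | (⟨⟩ | ⟨⟩ | i) <;> simp [eq_comm]

lemma adj_zvert_iff {i : Fin c} {u : V ⊕ (Unit ⊕ Unit ⊕ Fin c)} :
    (termAug G x y z c).Adj (Sum.inr (Sum.inr (Sum.inr i))) u ↔ u = sVert V c := by
  unfold termAug sVert
  rw [SimpleGraph.fromRel_adj]
  rcases u with v | (⟨⟩ | ⟨⟩ | j) <;> simp [eq_comm]

variable [DecidableEq V]

lemma ham_reverse {a b : V} {p : G.Walk a b} (h : p.IsHamiltonian) :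
    p.reverse.IsHamiltonian := by
  intro v
  rw [Walk.support_reverse, List.count_reverse]
  exact h v

lemma hamCycle_rotate {v u : V} {p : G.Walk v v}
    (hp : p.IsHamiltonianCycle) (hu : u ∈ p.support) :
    (p.rotate u hu).IsHamiltonianCycle := by
  rw [Walk.isHamiltonianCycle_iff_isCycle_and_support_count_tail_eq_one] at *
  exact ⟨hp.1.rotate hu, fun a => ((Walk.support_rotate p _ hu).perm.count_eq a).trans (hp.2 a)⟩

lemma hamCycle_reverse {v : V} {p : G.Walk v v}
    (hp : p.IsHamiltonianCycle) : p.reverse.IsHamiltonianCycle := by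
  have hcount : ∀ b, p.reverse.support.tail.count b = 1 := by
    intro b
    have h1 : p.reverse.support.count b = p.support.count b := by
      rw [Walk.support_reverse, List.count_reverse]
    have h2 : p.reverse.support = v :: p.reverse.support.tail := Walk.support_eq_cons _
    have key : p.reverse.support.count b
        = p.reverse.support.tail.count b + if v = b then 1 else 0 := by
      conv_lhs => rw [h2]
      rw [List.count_cons]
      simp
    by_cases hb : b = v
    · subst hb
      have h3 : p.support.count b = 2 := hp.count_support_self
      rw [key, h3, if_pos rfl] at h1
      omega
    · have h3 : p.support.count b = 1 := hp.support_count_of_ne (Ne.symm hb)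
      rw [key, h3, if_neg (fun h => hb h.symm)] at h1
      omega
  have hnodup : p.reverse.support.tail.Nodup :=
    List.nodup_iff_count_le_one.2 fun a => le_of_eq (hcount a)
  have hne : p.reverse ≠ Walk.nil := by
    intro h
    apply hp.ne_nil
    have := congrArg Walk.reverse h
    rwa [Walk.reverse_reverse, Walk.reverse_nil] at this
  rw [Walk.isHamiltonianCycle_iff_isCycle_and_support_count_tail_eq_one]
  refine ⟨Walk.isCycle_def _ |>.2
    ⟨Walk.IsTrail.reverse _ hp.isCycle.isCircuit.isTrail, hne, hnodup⟩, hcount⟩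

lemma edges_eq_cons {a b : V} (p : G.Walk a b) (hnil : ¬ p.Nil) :
    p.edges = s(a, p.getVert 1) :: p.tail.edges := by
  have := congrArg Walk.edges (Walk.cons_tail_eq p hnil)
  rw [Walk.edges_cons] at this
  exact this.symm

lemma first_edge {u v w : V} (p : G.Walk u v) (hp : p.IsPath) (he : s(u, w) ∈ p.edges) :
    w = p.getVert 1 := by
  cases p with
  | nil => simp at he
  | cons h q =>
    rw [Walk.edges_cons] at he
    rcases List.mem_cons.mp he with he1 | he2
    · rcases Sym2.eq_iff.mp he1 with ⟨-, rfl⟩ | ⟨h1, rfl⟩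
      · simp
      · exact absurd h1 h.ne
    · exact absurd (Walk.fst_mem_support_of_mem_edges q he2)
        ((Walk.cons_isPath_iff h q).mp hp).2

lemma snd_ne_penult {x : V} {p : G.Walk x x} (hp : p.IsHamiltonianCycle) :
    p.getVert 1 ≠ p.reverse.getVert 1 := by
  intro hab
  have hnil : ¬ p.Nil := hp.isCycle.not_nil
  have h3 := hp.isCycle.three_le_length
  have hnil' : ¬ p.reverse.Nil := by
    rw [Walk.nil_iff_length_eq, Walk.length_reverse]; omega
  have hE1 : p.edges = s(x, p.getVert 1) :: p.tail.edges := edges_eq_cons p hnil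
  have hE2 : p.reverse.edges = s(x, p.reverse.getVert 1) :: p.reverse.tail.edges :=
    edges_eq_cons p.reverse hnil'
  rw [Walk.edges_reverse] at hE2
  have hE2' : p.edges.reverse = s(x, p.getVert 1) :: p.reverse.tail.edges := by
    rw [hab]; exact hE2
  have hE3 : p.edges = p.reverse.tail.edges.reverse ++ [s(x, p.getVert 1)] := by
    have := congrArg List.reverse hE2'
    rwa [List.reverse_reverse, List.reverse_cons] at this
  have hnd : p.edges.Nodup := hp.isCycle.isCircuit.isTrail.edges_nodup
  have hxa_not : s(x, p.getVert 1) ∉ p.tail.edges := by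
    rw [hE1] at hnd; exact (List.nodup_cons.mp hnd).1
  have hlen : 3 ≤ p.edges.length := by rw [Walk.length_edges]; omega
  cases hrev : p.reverse.tail.edges.reverse with
  | nil =>
    rw [hrev] at hE3
    rw [hE3] at hlen
    simp at hlen
  | cons hd tl =>
    rw [hrev, hE1] at hE3
    obtain ⟨h1, h2⟩ := List.cons_eq_cons.mp hE3
    exact hxa_not (h2 ▸ List.mem_append_right tl (List.mem_singleton_self _))

lemma four_le_card [Fintype V] {x : V} (hx : (G.neighborSet x).ncard = 3) :
    4 ≤ Fintype.card V := by
  have hxn : x ∉ G.neighborSet x := by simp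
  have h4 : (insert x (G.neighborSet x)).ncard = 4 := by
    rw [Set.ncard_insert_of_notMem hxn (Set.toFinite _), hx]
  have hle : (insert x (G.neighborSet x)).ncard ≤ (Set.univ : Set V).ncard :=
    Set.ncard_le_ncard (Set.subset_univ _) (Set.toFinite _)
  rw [Set.ncard_univ, Nat.card_eq_fintype_card] at hle
  omega

lemma exists_ham_path [Fintype V] (hx : (G.neighborSet x).ncard = 3)
    (hy : G.Adj x y) (hz : G.Adj x z) (hyz : y ≠ z)
    (h : ∃ (v : V) (p : G.Walk v v), p.IsHamiltonianCycle) :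
    ∃ w, (w = y ∨ w = z) ∧ G.Adj x w ∧ ∃ r : G.Walk x w, r.IsHamiltonian := by
  obtain ⟨v, p, hp⟩ := h
  have hx' : x ∈ p.support := hp.mem_support x
  have hp1 : (p.rotate x hx').IsHamiltonianCycle := hamCycle_rotate hp hx'
  set p1 := p.rotate x hx' with hp1def
  have hnil : ¬ p1.Nil := hp1.isCycle.not_nil
  have hnil' : ¬ p1.reverse.Nil := by
    rw [Walk.nil_iff_length_eq, Walk.length_reverse]
    have := hp1.isCycle.three_le_length; omega
  have ha : G.Adj x (p1.getVert 1) := Walk.adj_snd hnil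
  have hb : G.Adj x (p1.reverse.getVert 1) := Walk.adj_snd hnil'
  have hab : p1.getVert 1 ≠ p1.reverse.getVert 1 := snd_ne_penult hp1
  have hT : p1.tail.IsHamiltonian := hp1.isHamiltonian_tail
  have hT' : p1.reverse.tail.IsHamiltonian := (hamCycle_reverse hp1).isHamiltonian_tail
  have hmem : (p1.getVert 1 = y ∨ p1.getVert 1 = z) ∨
      (p1.reverse.getVert 1 = y ∨ p1.reverse.getVert 1 = z) := by
    by_contra hcon
    push_neg at hcon
    obtain ⟨⟨hay, haz⟩, hby, hbz⟩ := hcon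
    have hsub : ({y, z, p1.getVert 1, p1.reverse.getVert 1} : Set V) ⊆ G.neighborSet x := by
      intro u hu
      rcases hu with rfl | rfl | rfl | rfl
      exacts [hy, hz, ha, hb]
    have hcard : ({y, z, p1.getVert 1, p1.reverse.getVert 1} : Set V).ncard = 4 := by
      rw [Set.ncard_insert_of_notMem (by simp only [Set.mem_insert_iff, Set.mem_singleton_iff, not_or]; exact ⟨hyz, Ne.symm hay, Ne.symm hby⟩) (Set.toFinite _),
        Set.ncard_insert_of_notMem (by simp only [Set.mem_insert_iff, Set.mem_singleton_iff, not_or]; exact ⟨Ne.symm haz, Ne.symm hbz⟩) (Set.toFinite _),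
        Set.ncard_insert_of_notMem (by simp only [Set.mem_singleton_iff]; exact hab) (Set.toFinite _), Set.ncard_singleton]
    have hle := Set.ncard_le_ncard hsub (Set.toFinite _)
    rw [hcard, hx] at hle
    omega
  rcases hmem with h1 | h1
  · exact ⟨p1.getVert 1, h1, ha, p1.tail.reverse, ham_reverse hT⟩
  · exact ⟨p1.reverse.getVert 1, h1, hb, p1.reverse.tail.reverse, ham_reverse hT'⟩

lemma lift_walk : ∀ {u w : V ⊕ (Unit ⊕ Unit ⊕ Fin c)} (q : (termAug G x y z c).Walk u w)
    {a b : V}, u = Sum.inl a → w = Sum.inl b → (∀ m ∈ q.support, ∃ v, m = Sum.inl v) →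
    ∃ r : G.Walk a b, r.support.map Sum.inl = q.support := by
  intro u w q
  induction q with
  | nil =>
    intro a b ha hb hall
    subst ha
    obtain rfl : a = b := Sum.inl_injective hb
    exact ⟨Walk.nil, by simp⟩
  | @cons u u' w h q ih =>
    intro a b ha hb hall
    obtain ⟨a', ha'⟩ := hall u' (by simp)
    subst ha ha'
    have hGadj : G.Adj a a' := adj_inl_inl.mp h
    obtain ⟨r, hr⟩ := ih rfl hb (fun m hm => hall m (by simp [hm]))
    exact ⟨Walk.cons hGadj r, by simp [hr]⟩

lemma build_path [Fintype V] {w : V}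
    (hw : w = y ∨ w = z) (r : G.Walk x w) (hr : r.IsHamiltonian) :
    ∃ p : (termAug G x y z c).Walk (sVert V c) (tVert V c), p.IsPath ∧
      Fintype.card V + 2 ≤ p.support.length := by
  let f : G →g termAug G x y z c := ⟨Sum.inl, fun h => adj_inl_inl.mpr h⟩
  have h1 : (termAug G x y z c).Adj (sVert V c) (Sum.inl x) := adj_s_iff.mpr (Or.inl rfl)
  have h2 : (termAug G x y z c).Adj (Sum.inl w) (tVert V c) :=
    (adj_t_iff.mpr (hw.imp (fun h => by rw [h]) (fun h => by rw [h]))).symm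
  refine ⟨Walk.cons h1 ((r.map f).concat h2), ?_, ?_⟩
  · rw [Walk.isPath_def, Walk.support_cons, Walk.support_concat, Walk.support_map]
    rw [List.nodup_cons, List.nodup_append]
    refine ⟨?_, (hr.isPath.support_nodup).map Sum.inl_injective, List.nodup_singleton _, ?_⟩
    · simp [sVert, tVert]
    · simp [tVert]
  · rw [Walk.support_cons, Walk.support_concat, Walk.support_map]
    simp only [List.concat_eq_append, List.length_cons, List.length_append,
      List.length_map, List.length_singleton]
    have hlen : r.support.length = Fintype.card V := by
      rw [Walk.length_support, hr.length_eq,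
        Nat.sub_add_cancel (Fintype.card_pos_iff.mpr ⟨x⟩)]
    omega

end Aux

/-- `G` has a Hamiltonian cycle iff the terminal-augmented graph `G'` contains an
`st`-path `P` with `|V(P)| ≥ n + 2`. -/
theorem stmt_7 {V : Type*} [Fintype V] [DecidableEq V] (G : SimpleGraph V)
    (hG : G.Connected) (x y z : V) (hx : (G.neighborSet x).ncard = 3)
    (hy : G.Adj x y) (hz : G.Adj x z) (hyz : y ≠ z) (c : ℕ) :
    HasHamiltonianCycle G ↔
      ∃ p : (termAug G x y z c).Walk (sVert V c) (tVert V c), p.IsPath ∧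
        Fintype.card V + 2 ≤ p.support.length := by
  constructor
  · intro h
    obtain ⟨w, hw, hxw, r, hr⟩ := exists_ham_path hx hy hz hyz h
    exact build_path hw r hr
  · rintro ⟨p, hpath, hlen⟩
    have hcard4 : 4 ≤ Fintype.card V := four_le_card hx
    have hZ : ∀ i : Fin c, Sum.inr (Sum.inr (Sum.inr i)) ∉ p.support := by
      intro i hmem
      have hut : (Sum.inr (Sum.inr (Sum.inr i)) : V ⊕ (Unit ⊕ Unit ⊕ Fin c)) ≠ tVert V c := by
        simp [tVert]
      have hq2nil : ¬ (p.dropUntil _ hmem).Nil := Walk.not_nil_of_ne hut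
      have hadj := Walk.adj_snd hq2nil
      have hs2 : (p.dropUntil _ hmem).getVert 1 = sVert V c := adj_zvert_iff.mp hadj
      have hs_tail : sVert V c ∈ (p.dropUntil _ hmem).support.tail := by
        have h7 := Walk.start_mem_support (p.dropUntil (Sum.inr (Sum.inr (Sum.inr i))) hmem).tail
        rw [Walk.support_tail_of_not_nil _ hq2nil, Walk.snd, hs2] at h7
        exact h7
      have hs1 : sVert V c ∈ (p.takeUntil _ hmem).support := Walk.start_mem_support _
      have hnd := hpath.support_nodup
      rw [← Walk.take_spec p hmem, Walk.support_append] at hnd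
      exact (List.disjoint_of_nodup_append hnd) hs1 hs_tail
    set F : Finset (V ⊕ (Unit ⊕ Unit ⊕ Fin c)) :=
      insert (sVert V c) (insert (tVert V c) (Finset.univ.image Sum.inl)) with hF
    have hsubF : ∀ u ∈ p.support, u ∈ F := by
      intro u hu
      rcases u with v' | (⟨⟩ | ⟨⟩ | i)
      · simp [hF]
      · simp [hF, sVert]
      · simp [hF, tVert]
      · exact absurd hu (hZ i)
    have hcardF : F.card ≤ Fintype.card V + 2 := by
      refine (Finset.card_insert_le _ _).trans ?_
      have h5 := Finset.card_insert_le (tVert V c)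
        (Finset.univ.image (Sum.inl : V → V ⊕ (Unit ⊕ Unit ⊕ Fin c)))
      rw [Finset.card_image_of_injective _ Sum.inl_injective, Finset.card_univ] at h5
      omega
    have hndp := hpath.support_nodup
    have hSlen : p.support.toFinset.card = p.support.length := List.toFinset_card_of_nodup hndp
    have hsub : p.support.toFinset ⊆ F := fun u hu => hsubF u (List.mem_toFinset.mp hu)
    have hFeq : p.support.toFinset = F := Finset.eq_of_subset_of_card_le hsub (by omega)
    have hBv : ∀ v' : V, Sum.inl v' ∈ p.support := by
      intro v'
      have hm : (Sum.inl v' : V ⊕ (Unit ⊕ Unit ⊕ Fin c)) ∈ F := by simp [hF]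
      rw [← hFeq] at hm
      exact List.mem_toFinset.mp hm
    cases p with
    | cons h1 p2 =>
      rename_i u2
      rcases adj_s_iff.mp h1 with rfl | ⟨i, rfl⟩
      swap
      · exact absurd (List.mem_cons_of_mem _ (Walk.start_mem_support p2)) (hZ i)
      -- now p2 : Walk (inl x) t
      have hnil2 : ¬ p2.reverse.Nil :=
        Walk.not_nil_of_ne (by simp [tVert] : (tVert V c) ≠ (Sum.inl x : V ⊕ _))
      have hadjt : (termAug G x y z c).Adj (tVert V c) (p2.reverse.getVert 1) :=
        Walk.adj_snd hnil2
      obtain ⟨w0, hw0, hweq⟩ : ∃ w0, (w0 = y ∨ w0 = z) ∧ p2.reverse.getVert 1 = Sum.inl w0 := by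
        rcases adj_t_iff.mp hadjt with h | h
        exacts [⟨y, Or.inl rfl, h⟩, ⟨z, Or.inr rfl, h⟩]
      set q := p2.reverse.tail.reverse with hq
      have hsup2 : p2.support = q.support ++ [tVert V c] := by
        have h5 : p2.reverse.support = tVert V c :: p2.reverse.tail.support :=
          (Walk.cons_support_tail hnil2).symm
        have h6 := congrArg List.reverse h5
        rw [Walk.support_reverse, List.reverse_reverse, List.reverse_cons] at h6
        rw [h6, hq, Walk.support_reverse]
      have hnd : ((sVert V c) :: (q.support ++ [tVert V c])).Nodup := by
        have := hpath.support_nodup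
        rwa [Walk.support_cons, hsup2] at this
      have hsq : sVert V c ∉ q.support := fun hm =>
        (List.nodup_cons.mp hnd).1 (List.mem_append_left _ hm)
      have htq : tVert V c ∉ q.support := fun hm =>
        (List.disjoint_of_nodup_append (List.nodup_cons.mp hnd).2) hm (List.mem_singleton_self _)
      have hndq : q.support.Nodup := (List.nodup_cons.mp hnd).2.of_append_left
      have hallq : ∀ m ∈ q.support, ∃ v0, m = Sum.inl v0 := by
        intro m hm
        have hmF : m ∈ F := hsubF m
          (by rw [Walk.support_cons, hsup2]
              exact List.mem_cons_of_mem _ (List.mem_append_left _ hm))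
        simp only [hF, Finset.mem_insert, Finset.mem_image, Finset.mem_univ, true_and] at hmF
        rcases hmF with rfl | rfl | ⟨v0, rfl⟩
        · exact absurd hm hsq
        · exact absurd hm htq
        · exact ⟨v0, rfl⟩
      have hinq : ∀ v0 : V, Sum.inl v0 ∈ q.support := by
        intro v0
        have hm := hBv v0
        rw [Walk.support_cons, hsup2] at hm
        rcases List.mem_cons.mp hm with h | h
        · simp [sVert] at h
        · rcases List.mem_append.mp h with h | h
          · exact h
          · rw [List.mem_singleton] at h
            simp [tVert] at h
      obtain ⟨r, hr⟩ := lift_walk (q.copy rfl hweq) rfl rfl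
        (fun m hm => hallq m (by rwa [Walk.support_copy] at hm))
      rw [Walk.support_copy] at hr
      have hrham : r.IsHamiltonian := by
        intro v0
        have hrnd : r.support.Nodup := List.Nodup.of_map _ (hr ▸ hndq)
        have hrmem : v0 ∈ r.support := by
          have := hinq v0
          rw [← hr] at this
          exact (List.mem_map_of_injective Sum.inl_injective).mp this
        exact List.count_eq_one_of_mem hrnd hrmem
      have hxw : G.Adj x w0 := by rcases hw0 with rfl | rfl; exacts [hy, hz]
      have hedge : s(x, w0) ∉ r.reverse.edges := by
        rw [Walk.edges_reverse, List.mem_reverse]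
        intro hmem
        have hw1 : w0 = r.getVert 1 := first_edge r hrham.isPath hmem
        have hlr := hrham.length_eq
        cases r with
        | nil => exact hxw.ne rfl
        | cons h' rt =>
          rename_i u1
          have hu1 : (Walk.cons h' rt).getVert 1 = u1 := by
            simp [Walk.getVert_cons_succ]
          rw [hu1] at hw1
          subst hw1
          have hrt : rt = Walk.nil := Walk.isPath_iff_eq_nil.mp hrham.isPath.of_cons
          have hlen2 : (Walk.cons h' rt).length = 1 := by rw [hrt]; simp
          omega
      have hcyc : (Walk.cons hxw r.reverse).IsHamiltonianCycle := by
        rw [Walk.isHamiltonianCycle_iff_isCycle_and_support_count_tail_eq_one]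
        constructor
        · exact (Walk.cons_isCycle_iff r.reverse hxw).mpr ⟨hrham.isPath.reverse, hedge⟩
        · intro a
          rw [Walk.support_cons, List.tail_cons]
          exact ham_reverse hrham a
      exact ⟨x, _, hcyc⟩
end

section
/- Let G be a connected graph on n vertices, x a vertex of G with exactly three neighbors, y and z two distinct neighbors of x, and c ≥ 0 an integer; let G' be the associated terminal-augmented graph with terminals s and t, and let G_+ be obtained from G' by additionally adding, for each vertex v of G, two new vertices adjacent only to (the copy of) v. Then G has a Hamiltonian cycle if and only if G_+ contains an st-path P with |V(P)| ≤ n + 2 and |N_{G_+}(V(P))| ≥ 2n + c. -/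
open SimpleGraph

/-- The graph `G_+`, obtained from the terminal-augmented graph `G'` by adding,
for each vertex `v` of `G`, two new vertices (modelled as `(v, false)` and
`(v, true)`) adjacent only to (the copy of) `v`. -/
def termAugPlus {V : Type*} (G : SimpleGraph V) (x y z : V) (c : ℕ) :
    SimpleGraph ((V ⊕ (Unit ⊕ Unit ⊕ Fin c)) ⊕ (V × Bool)) :=
  SimpleGraph.fromRel (fun a b =>
    match a, b with
    | Sum.inl u, Sum.inl w => (termAug G x y z c).Adj u w
    | Sum.inl (Sum.inl v), Sum.inr (w, _) => v = w
    | _, _ => False)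


universe u

lemma aux_rotate {V : Type u} [DecidableEq V] {G : SimpleGraph V} {v u : V} {p : G.Walk v v}
    (hp : p.IsHamiltonianCycle) (hu : u ∈ p.support) :
    (p.rotate u hu).IsHamiltonianCycle := by
  refine ⟨hp.isCycle.rotate hu, ?_⟩
  intro a
  rw [show (p.rotate u hu).tail.support = (p.rotate u hu).support.tail by
    rw [← Walk.cons_support_tail (hp.isCycle.rotate hu).not_nil, List.tail_cons]]
  rw [(Walk.support_rotate p u hu).perm.count_eq]
  rw [← show p.tail.support = p.support.tail by
    rw [← Walk.cons_support_tail hp.isCycle.not_nil, List.tail_cons]]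
  exact hp.isHamiltonian_tail a

lemma aux_edge_end {V : Type u} {G : SimpleGraph V} {a b : V} {w : G.Walk a b}
    (hw : w.IsPath) (he : s(a, b) ∈ w.edges) : w.length = 1 := by
  cases w with
  | nil => simp at he
  | cons h w =>
    rename_i u
    rw [Walk.edges_cons, List.mem_cons] at he
    have hcons := (Walk.cons_isPath_iff h w).mp hw
    rcases he with he | he
    · rw [Sym2.eq_iff] at he
      rcases he with ⟨-, rfl⟩ | ⟨rfl, rfl⟩
      · have : w = Walk.nil := (Walk.isPath_iff_eq_nil (p := w)).mp hcons.1
        subst this; simp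
      · exact absurd h (G.irrefl)
    · exact absurd (w.fst_mem_support_of_mem_edges he) hcons.2

lemma aux_copy_ham {V : Type u} [DecidableEq V] {G : SimpleGraph V} {a b a' b' : V}
    (w : G.Walk a b) (h1 : a = a') (h2 : b = b') (hw : w.IsHamiltonian) :
    (w.copy h1 h2).IsHamiltonian := by
  intro v; rw [Walk.support_copy]; exact hw v

lemma aux_path_to_cycle {V : Type u} [DecidableEq V] [Fintype V] {G : SimpleGraph V} {x b : V}
    (hadj : G.Adj x b) (hcard : 4 ≤ Fintype.card V) (w : G.Walk x b)
    (hp : w.IsPath) (hmem : ∀ v, v ∈ w.support) :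
    ∃ (v : V) (p : G.Walk v v), p.IsHamiltonianCycle := by
  have hham : w.IsHamiltonian := hp.isHamiltonian_of_mem hmem
  have hlen : w.length = Fintype.card V - 1 := hham.length_eq
  refine ⟨b, Walk.cons hadj.symm w, ?_, ?_⟩
  · refine (Walk.cons_isCycle_iff _ _).mpr ⟨hp, ?_⟩
    intro hcontra
    rw [Sym2.eq_swap] at hcontra
    have := aux_edge_end hp hcontra
    omega
  · rw [Walk.tail_cons]
    exact aux_copy_ham _ _ _ hham

lemma aux_ham_decomp {V : Type u} [DecidableEq V] {G : SimpleGraph V} {x : V}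
    {p : G.Walk x x} (hp : p.IsHamiltonianCycle) :
    ∃ a b : V, a ≠ b ∧ G.Adj x a ∧ G.Adj x b ∧
      (∃ w : G.Walk x a, w.IsPath ∧ ∀ v ∈ p.support, v ∈ w.support) ∧
      (∃ w : G.Walk x b, w.IsPath ∧ ∀ v ∈ p.support, v ∈ w.support) := by
  have h3 := hp.isCycle.three_le_length
  cases p with
  | nil => exact absurd rfl hp.ne_nil
  | cons h q =>
    rename_i b₀
    obtain ⟨hqpath, hedge⟩ := (Walk.cons_isCycle_iff _ _).mp hp.isCycle
    obtain ⟨a, q₁, h₁, heq⟩ := Walk.exists_cons_eq_concat h q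
    -- support equation
    have hsup : x :: q.support = q₁.support ++ [x] := by
      have := congrArg Walk.support heq
      simpa [Walk.support_concat, List.concat_eq_append] using this
    have h2 : q.support = q₁.support.tail ++ [x] := by
      rw [Walk.support_eq_cons q₁, List.cons_append, List.cons.injEq] at hsup
      exact hsup.2
    have hq_nodup : q.support.Nodup := hqpath.support_nodup
    have htail_nodup : q₁.support.tail.Nodup ∧ x ∉ q₁.support.tail := by
      rw [h2] at hq_nodup
      simp [List.nodup_append] at hq_nodup
      tauto
    have hq₁path : q₁.IsPath := by
      apply Walk.IsPath.mk'
      rw [Walk.support_eq_cons q₁]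
      exact List.nodup_cons.mpr ⟨htail_nodup.2, htail_nodup.1⟩
    -- lengths
    have hlen_eq : q₁.length = q.length := by
      have := congrArg Walk.length heq
      simp [Walk.length_concat, Walk.length_cons] at this
      omega
    have hqlen : 3 ≤ q.length + 1 := by
      simpa [Walk.length_cons] using h3
    -- a ≠ b₀ via edges
    have hedges : s(x, b₀) :: q.edges = q₁.edges ++ [s(a, x)] := by
      have := congrArg Walk.edges heq
      simpa [Walk.edges_concat, List.concat_eq_append] using this
    have hne : a ≠ b₀ := by
      intro hab
      have hq₁edne : q₁.edges ≠ [] := by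
        intro hnil
        have := Walk.length_edges q₁
        rw [hnil] at this
        simp at this
        omega
      obtain ⟨e₀, l, hE⟩ := List.exists_cons_of_ne_nil hq₁edne
      rw [hE] at hedges
      simp only [List.cons_append, List.cons.injEq] at hedges
      apply hedge
      rw [hedges.2]
      subst hab
      simp [Sym2.eq_swap]
    -- memberships
    have hmem_q₁ : ∀ v ∈ (Walk.cons h q).support, v ∈ q₁.support := by
      intro v hv
      rw [Walk.support_cons, List.mem_cons] at hv
      rcases hv with rfl | hv
      · exact q₁.start_mem_support
      · rw [h2, List.mem_append] at hv
        rcases hv with hv | hv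
        · rw [Walk.support_eq_cons q₁]; exact List.mem_cons_of_mem _ hv
        · simp at hv; subst hv; exact q₁.start_mem_support
    have hmem_qr : ∀ v ∈ (Walk.cons h q).support, v ∈ q.reverse.support := by
      intro v hv
      rw [Walk.support_reverse, List.mem_reverse]
      rw [Walk.support_cons, List.mem_cons] at hv
      rcases hv with rfl | hv
      · exact q.end_mem_support
      · exact hv
    exact ⟨a, b₀, hne, h₁.symm, h, ⟨q₁, hq₁path, hmem_q₁⟩,
      ⟨q.reverse, hqpath.reverse, hmem_qr⟩⟩


section Aux2

variable {V : Type*} (G : SimpleGraph V) (x y z : V) (c : ℕ)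

lemma adj_VV {v w : V} :
    (termAugPlus G x y z c).Adj (Sum.inl (Sum.inl v)) (Sum.inl (Sum.inl w)) ↔ G.Adj v w := by
  simp [termAugPlus, termAug, SimpleGraph.fromRel_adj, adj_comm]
  aesop

lemma adj_s {u} (h : (termAugPlus G x y z c).Adj (Sum.inl (sVert V c)) u) :
    u = Sum.inl (Sum.inl x) ∨ ∃ i : Fin c, u = Sum.inl (Sum.inr (Sum.inr (Sum.inr i))) := by
  rcases u with (v | (⟨⟩ | ⟨⟩ | i)) | ⟨v, b⟩ <;>
    simp_all [termAugPlus, termAug, sVert, SimpleGraph.fromRel_adj]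

lemma adj_t {u} (h : (termAugPlus G x y z c).Adj u (Sum.inl (tVert V c))) :
    u = Sum.inl (Sum.inl y) ∨ u = Sum.inl (Sum.inl z) := by
  rcases u with (v | (⟨⟩ | ⟨⟩ | i)) | ⟨v, b⟩ <;>
    simp_all [termAugPlus, termAug, tVert, SimpleGraph.fromRel_adj]

lemma adj_pend {v : V} {b : Bool} {u} (h : (termAugPlus G x y z c).Adj (Sum.inr (v, b)) u) :
    u = Sum.inl (Sum.inl v) := by
  rcases u with (w | (⟨⟩ | ⟨⟩ | i)) | ⟨w, b'⟩ <;>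
    simp_all [termAugPlus, termAug, SimpleGraph.fromRel_adj]

lemma adj_s_x : (termAugPlus G x y z c).Adj (Sum.inl (sVert V c)) (Sum.inl (Sum.inl x)) := by
  simp [termAugPlus, termAug, sVert, SimpleGraph.fromRel_adj]

lemma adj_b_t {b : V} (hb : b = y ∨ b = z) :
    (termAugPlus G x y z c).Adj (Sum.inl (Sum.inl b)) (Sum.inl (tVert V c)) := by
  simp [termAugPlus, termAug, tVert, SimpleGraph.fromRel_adj, hb]

lemma adj_pend' (v : V) (b : Bool) :
    (termAugPlus G x y z c).Adj (Sum.inr (v, b)) (Sum.inl (Sum.inl v)) := by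
  simp [termAugPlus, termAug, SimpleGraph.fromRel_adj]

lemma adj_Z_s (i : Fin c) :
    (termAugPlus G x y z c).Adj (Sum.inl (Sum.inr (Sum.inr (Sum.inr i)))) (Sum.inl (sVert V c)) := by
  simp [termAugPlus, termAug, sVert, SimpleGraph.fromRel_adj]

lemma aux_pullback {u₁ u₂} (r : (termAugPlus G x y z c).Walk u₁ u₂)
    (hr : ∀ u ∈ r.support, ∃ v : V, u = Sum.inl (Sum.inl v)) :
    ∀ a b : V, u₁ = Sum.inl (Sum.inl a) → u₂ = Sum.inl (Sum.inl b) →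
      ∃ w : G.Walk a b,
        w.support.map (fun v => (Sum.inl (Sum.inl v) : (V ⊕ (Unit ⊕ Unit ⊕ Fin c)) ⊕ (V × Bool)))
          = r.support := by
  induction r with
  | nil =>
    intro a b h1 h2
    obtain rfl : a = b := by rw [h1] at h2; simpa using h2
    exact ⟨Walk.nil, by simp [h1.symm]⟩
  | cons h r ih =>
    rename_i w₁ w₂ w₃
    intro a b h1 h2
    obtain ⟨a', ha'⟩ := hr w₂ (by simp)
    subst h1 ha'
    have hadj : G.Adj a a' := (adj_VV G x y z c).mp h
    obtain ⟨w, hw⟩ := ih (fun u hu => hr u (by simp [hu])) a' b rfl h2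
    exact ⟨Walk.cons hadj w, by simp [hw]⟩

end Aux2

section Main

variable {V : Type*} [Fintype V] [DecidableEq V] (G : SimpleGraph V) (x y z : V) (c : ℕ)

lemma build_forward (b' : V) (hb' : b' = y ∨ b' = z)
    (w : G.Walk x b') (hwpath : w.IsPath) (hwmem : ∀ v, v ∈ w.support) :
    ∃ p : (termAugPlus G x y z c).Walk (Sum.inl (sVert V c)) (Sum.inl (tVert V c)),
        p.IsPath ∧ p.support.length ≤ Fintype.card V + 2 ∧
        2 * Fintype.card V + c ≤
          (openNbhd (termAugPlus G x y z c) {a | a ∈ p.support}).ncard := by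
  classical
  set f : G →g termAugPlus G x y z c :=
    ⟨fun v => Sum.inl (Sum.inl v), fun h => (adj_VV G x y z c).mpr h⟩ with hf
  set P : (termAugPlus G x y z c).Walk (Sum.inl (sVert V c)) (Sum.inl (tVert V c)) :=
    Walk.cons (adj_s_x G x y z c)
      ((w.map f).append (Walk.cons (adj_b_t G x y z c hb') Walk.nil)) with hP
  have hinj : Function.Injective (fun v : V =>
      (Sum.inl (Sum.inl v) : (V ⊕ (Unit ⊕ Unit ⊕ Fin c)) ⊕ (V × Bool))) := by
    intro a b hab; simpa using hab
  have hPsup : P.support = (Sum.inl (sVert V c)) ::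
      (w.support.map (fun v => Sum.inl (Sum.inl v)) ++ [Sum.inl (tVert V c)]) := by
    simp only [hP, Walk.support_cons, Walk.support_append, Walk.support_map]
    congr 1
  have hham := hwpath.isHamiltonian_of_mem hwmem
  have hpos : 0 < Fintype.card V := @Fintype.card_pos V _ ⟨x⟩
  have hwsuplen : w.support.length = Fintype.card V := by
    rw [Walk.length_support, hham.length_eq]; omega
  refine ⟨P, ?_, ?_, ?_⟩
  · rw [Walk.isPath_def, hPsup]
    refine List.nodup_cons.mpr ⟨?_, List.nodup_append.mpr ⟨?_, ?_, ?_⟩⟩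
    · simp [sVert, tVert]
    · exact List.Nodup.map hinj hwpath.support_nodup
    · simp
    · intro u hu; simp at hu; obtain ⟨v, -, rfl⟩ := hu; simp [tVert]
  · rw [hPsup]; simp [hwsuplen]
  · set T₁ : Set ((V ⊕ (Unit ⊕ Unit ⊕ Fin c)) ⊕ (V × Bool)) := Set.range Sum.inr with hT₁def
    set T₂ : Set ((V ⊕ (Unit ⊕ Unit ⊕ Fin c)) ⊕ (V × Bool)) :=
      Set.range (fun i : Fin c => Sum.inl (Sum.inr (Sum.inr (Sum.inr i)))) with hT₂def
    have hdisj : Disjoint T₁ T₂ := by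
      rw [Set.disjoint_left]
      rintro _ ⟨q, rfl⟩ ⟨i, h⟩
      simp at h
    have hT₁ : T₁.ncard = 2 * Fintype.card V := by
      rw [hT₁def, ← Set.image_univ, Set.ncard_image_of_injective _ Sum.inr_injective,
        Set.ncard_univ, Nat.card_eq_fintype_card, Fintype.card_prod, Fintype.card_bool]
      omega
    have hT₂ : T₂.ncard = c := by
      rw [hT₂def, ← Set.image_univ, Set.ncard_image_of_injective _ (by
        intro i j hij; simpa using hij), Set.ncard_univ, Nat.card_eq_fintype_card,
        Fintype.card_fin]
    have hsub : T₁ ∪ T₂ ⊆ openNbhd (termAugPlus G x y z c) {a | a ∈ P.support} := by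
      rintro u (⟨⟨v, bb⟩, rfl⟩ | ⟨i, rfl⟩)
      · refine ⟨?_, Sum.inl (Sum.inl v), ?_, adj_pend' G x y z c v bb⟩
        · show ¬ _ ∈ P.support
          rw [hPsup]; simp [sVert, tVert]
        · show _ ∈ P.support
          rw [hPsup]; simp [sVert, tVert, hwmem v]
      · refine ⟨?_, Sum.inl (sVert V c), P.start_mem_support, adj_Z_s G x y z c i⟩
        show ¬ _ ∈ P.support
        rw [hPsup]
        simp [sVert, tVert]
    calc 2 * Fintype.card V + c = (T₁ ∪ T₂).ncard := by
          rw [Set.ncard_union_eq hdisj (Set.toFinite _) (Set.toFinite _), hT₁, hT₂]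
      _ ≤ _ := Set.ncard_le_ncard hsub (Set.toFinite _)

end Main

section Main2

variable {V : Type*} [Fintype V] [DecidableEq V] (G : SimpleGraph V) (x y z : V) (c : ℕ)

lemma build_backward (hy : G.Adj x y) (hz : G.Adj x z) (hn4 : 4 ≤ Fintype.card V)
    (p : (termAugPlus G x y z c).Walk (Sum.inl (sVert V c)) (Sum.inl (tVert V c)))
    (hpath : p.IsPath) (hlen : p.support.length ≤ Fintype.card V + 2)
    (hnb : 2 * Fintype.card V + c ≤
      (openNbhd (termAugPlus G x y z c) {a | a ∈ p.support}).ncard) :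
    ∃ (v : V) (q : G.Walk v v), q.IsHamiltonianCycle := by
  classical
  set K : Set V := {v | Sum.inl (Sum.inl v) ∈ p.support} with hK
  set T₁ : Set ((V ⊕ (Unit ⊕ Unit ⊕ Fin c)) ⊕ (V × Bool)) :=
    (fun v => Sum.inl (Sum.inl v)) '' Kᶜ with hT₁def
  set T₂a : Set ((V ⊕ (Unit ⊕ Unit ⊕ Fin c)) ⊕ (V × Bool)) :=
    (fun v => Sum.inr (v, false)) '' K with hT₂adef
  set T₂b : Set ((V ⊕ (Unit ⊕ Unit ⊕ Fin c)) ⊕ (V × Bool)) :=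
    (fun v => Sum.inr (v, true)) '' K with hT₂bdef
  set T₃ : Set ((V ⊕ (Unit ⊕ Unit ⊕ Fin c)) ⊕ (V × Bool)) :=
    Set.range (fun i : Fin c => Sum.inl (Sum.inr (Sum.inr (Sum.inr i)))) with hT₃def
  have hsub : openNbhd (termAugPlus G x y z c) {a | a ∈ p.support} ⊆
      ((T₁ ∪ T₂a) ∪ T₂b) ∪ T₃ := by
    rintro u ⟨huS, w', hw'S, hadj⟩
    rcases u with ((v | (⟨⟩ | ⟨⟩ | i)) | ⟨v, b⟩)
    · exact Or.inl (Or.inl (Or.inl ⟨v, huS, rfl⟩))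
    · exact absurd p.start_mem_support huS
    · exact absurd p.end_mem_support huS
    · exact Or.inr ⟨i, rfl⟩
    · have hw' := adj_pend G x y z c hadj
      subst hw'
      cases b
      · exact Or.inl (Or.inl (Or.inr ⟨v, hw'S, rfl⟩))
      · exact Or.inl (Or.inr ⟨v, hw'S, rfl⟩)
  have hT₁ : T₁.ncard = Kᶜ.ncard :=
    Set.ncard_image_of_injective _ (fun a b hab => by simpa using hab)
  have hT₂a : T₂a.ncard = K.ncard :=
    Set.ncard_image_of_injective _ (fun a b hab => by simpa using hab)
  have hT₂b : T₂b.ncard = K.ncard :=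
    Set.ncard_image_of_injective _ (fun a b hab => by simpa using hab)
  have hT₃ : T₃.ncard = c := by
    rw [hT₃def, ← Set.image_univ, Set.ncard_image_of_injective _ (by
      intro i j hij; simpa using hij), Set.ncard_univ, Nat.card_eq_fintype_card,
      Fintype.card_fin]
  have hcompl : K.ncard + Kᶜ.ncard = Fintype.card V := by
    rw [Set.ncard_add_ncard_compl, Nat.card_eq_fintype_card]
  have hchain := Set.ncard_le_ncard hsub (Set.toFinite _)
  have h1 := Set.ncard_union_le ((T₁ ∪ T₂a) ∪ T₂b) T₃
  have h2 := Set.ncard_union_le (T₁ ∪ T₂a) T₂b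
  have h3 := Set.ncard_union_le T₁ T₂a
  have hKn : K.ncard ≤ Fintype.card V := by
    have := Set.ncard_le_ncard (Set.subset_univ K) (Set.toFinite _)
    rwa [Set.ncard_univ, Nat.card_eq_fintype_card] at this
  have hKcard : Fintype.card V ≤ K.ncard := by omega
  have hKuniv : K = Set.univ :=
    Set.eq_of_subset_of_ncard_le (Set.subset_univ _)
      (by rw [Set.ncard_univ, Nat.card_eq_fintype_card]; exact hKcard) (Set.toFinite _)
  have hKall : ∀ v : V, Sum.inl (Sum.inl v) ∈ p.support := by
    intro v
    have : v ∈ K := hKuniv ▸ Set.mem_univ v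
    exact this
  -- support is exactly s, t and the copies of V
  set S₀ : Set ((V ⊕ (Unit ⊕ Unit ⊕ Fin c)) ⊕ (V × Bool)) :=
    insert (Sum.inl (sVert V c)) (insert (Sum.inl (tVert V c))
      (Set.range (fun v : V => Sum.inl (Sum.inl v)))) with hS₀def
  have hS₀sub : S₀ ⊆ {a | a ∈ p.support} := by
    intro u hu
    rcases hu with rfl | hu
    · exact p.start_mem_support
    rcases hu with rfl | ⟨v, rfl⟩
    · exact p.end_mem_support
    · exact hKall v
  have hS₀card : S₀.ncard = Fintype.card V + 2 := by
    rw [hS₀def, Set.ncard_insert_of_notMem (by simp [sVert, tVert]) (Set.toFinite _),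
      Set.ncard_insert_of_notMem (by simp [tVert]) (Set.toFinite _),
      ← Set.image_univ, Set.ncard_image_of_injective _ (fun a b hab => by simpa using hab),
      Set.ncard_univ, Nat.card_eq_fintype_card]
  have hSle : ({a | a ∈ p.support} :
      Set ((V ⊕ (Unit ⊕ Unit ⊕ Fin c)) ⊕ (V × Bool))).ncard ≤ Fintype.card V + 2 := by
    have he : ({a | a ∈ p.support} :
        Set ((V ⊕ (Unit ⊕ Unit ⊕ Fin c)) ⊕ (V × Bool))) = ↑p.support.toFinset := by
      ext u; simp
    rw [he, Set.ncard_coe_finset]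
    exact le_trans (p.support.toFinset_card_le) hlen
  have hSeq : S₀ = {a | a ∈ p.support} :=
    Set.eq_of_subset_of_ncard_le hS₀sub (by omega) (Set.toFinite _)
  have hmem_iff : ∀ u, u ∈ p.support → u ∈ S₀ := by
    intro u hu
    rw [hSeq]; exact hu
  clear hsub hchain h1 h2 h3 hT₁ hT₂a hT₂b hT₃ hcompl hKn hKcard hnb hS₀sub hS₀card hSle
    hSeq hKuniv hlen
  -- decompose the path
  cases p with
  | cons h₁ q =>
    rename_i u₀
    have hu₀ : u₀ = Sum.inl (Sum.inl x) := by
      rcases adj_s G x y z c h₁ with h | ⟨i, rfl⟩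
      · exact h
      · exfalso
        have hmem : (Sum.inl (Sum.inr (Sum.inr (Sum.inr i))) :
            (V ⊕ (Unit ⊕ Unit ⊕ Fin c)) ⊕ (V × Bool)) ∈ (Walk.cons h₁ q).support := by
          rw [Walk.support_cons]
          exact List.mem_cons_of_mem _ q.start_mem_support
        have := hmem_iff _ hmem
        rw [hS₀def] at this
        rcases this with h' | h' | ⟨v, h'⟩ <;> simp [sVert, tVert] at h'
    subst hu₀
    cases q with
    | cons h₂ q₂ =>
      rename_i u₁
      obtain ⟨u₂, r, h₃, heq⟩ := Walk.exists_cons_eq_concat h₂ q₂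
      have hu₂ := adj_t G x y z c h₃
      have hsup : (Walk.cons h₁ (Walk.cons h₂ q₂)).support =
          Sum.inl (sVert V c) :: (r.support ++ [Sum.inl (tVert V c)]) := by
        rw [Walk.support_cons, heq, Walk.support_concat]
      have hnodup := hpath.support_nodup
      rw [hsup] at hnodup
      rw [List.nodup_cons] at hnodup
      obtain ⟨hs_not, hnodup⟩ := hnodup
      rw [List.nodup_append] at hnodup
      obtain ⟨hrnodup, -, hdisj⟩ := hnodup
      have ht_not : (Sum.inl (tVert V c) : (V ⊕ (Unit ⊕ Unit ⊕ Fin c)) ⊕ (V × Bool)) ∉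
          r.support := by
        intro hcon
        exact hdisj _ hcon _ (List.mem_singleton_self _) rfl
      have hs_not' : (Sum.inl (sVert V c) : (V ⊕ (Unit ⊕ Unit ⊕ Fin c)) ⊕ (V × Bool)) ∉
          r.support := fun hcon => hs_not (List.mem_append_left _ hcon)
      have hrange : ∀ u ∈ r.support, ∃ v, u = Sum.inl (Sum.inl v) := by
        intro u hu
        have humem : u ∈ (Walk.cons h₁ (Walk.cons h₂ q₂)).support := by
          rw [hsup]
          exact List.mem_cons_of_mem _ (List.mem_append_left _ hu)
        have := hmem_iff _ humem
        rw [hS₀def] at this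
        rcases this with rfl | this
        · exact absurd hu hs_not'
        rcases this with rfl | ⟨v, hv⟩
        · exact absurd hu ht_not
        · exact ⟨v, hv.symm⟩
      have hall : ∀ v : V, Sum.inl (Sum.inl v) ∈ r.support := by
        intro v
        have := hKall v
        rw [hsup] at this
        rcases List.mem_cons.mp this with h' | h'
        · simp [sVert] at h'
        rcases List.mem_append.mp h' with h' | h'
        · exact h'
        · simp [tVert] at h'
      obtain ⟨b', hb'adj, hu₂'⟩ : ∃ b', G.Adj x b' ∧ u₂ = Sum.inl (Sum.inl b') := by
        rcases hu₂ with rfl | rfl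
        · exact ⟨y, hy, rfl⟩
        · exact ⟨z, hz, rfl⟩
      obtain ⟨w, hwsup⟩ := aux_pullback G x y z c r hrange x b' rfl hu₂'
      have hwnodup : w.support.Nodup := by
        rw [← hwsup] at hrnodup
        exact hrnodup.of_map _
      have hwmem : ∀ v, v ∈ w.support := by
        intro v
        have := hall v
        rw [← hwsup, List.mem_map] at this
        obtain ⟨v', hv', he⟩ := this
        simp only [Sum.inl.injEq] at he
        subst he
        exact hv'
      exact aux_path_to_cycle hb'adj hn4 w (Walk.IsPath.mk' hwnodup) hwmem

end Main2

/-- `G` has a Hamiltonian cycle iff `G_+` contains an `st`-path `P` with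
`|V(P)| ≤ n + 2` and `|N_{G_+}(V(P))| ≥ 2n + c`. -/
theorem stmt_8 {V : Type*} [Fintype V] [DecidableEq V] (G : SimpleGraph V)
    (hG : G.Connected) (x y z : V) (hx : (G.neighborSet x).ncard = 3)
    (hy : G.Adj x y) (hz : G.Adj x z) (hyz : y ≠ z) (c : ℕ) :
    HasHamiltonianCycle G ↔
      ∃ p : (termAugPlus G x y z c).Walk (Sum.inl (sVert V c)) (Sum.inl (tVert V c)),
        p.IsPath ∧ p.support.length ≤ Fintype.card V + 2 ∧
        2 * Fintype.card V + c ≤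
          (openNbhd (termAugPlus G x y z c) {a | a ∈ p.support}).ncard := by
  classical
  have hn4 : 4 ≤ Fintype.card V := by
    have h1 : x ∉ G.neighborSet x := by simp
    have h2 : (insert x (G.neighborSet x)).ncard = 4 := by
      rw [Set.ncard_insert_of_notMem h1 (Set.toFinite _), hx]
    have h3 : (insert x (G.neighborSet x)).ncard ≤ (Set.univ : Set V).ncard :=
      Set.ncard_le_ncard (Set.subset_univ _) (Set.toFinite _)
    rw [Set.ncard_univ, Nat.card_eq_fintype_card] at h3
    omega
  constructor
  · rintro ⟨v₀, p₀, hp₀⟩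
    have hx_mem : x ∈ p₀.support := hp₀.mem_support x
    have hpHam := aux_rotate hp₀ hx_mem
    have hallmem : ∀ v, v ∈ (p₀.rotate x hx_mem).support := hpHam.mem_support
    obtain ⟨a, b, hab, hxa, hxb, ⟨wa, hwa, hwamem⟩, ⟨wb, hwb, hwbmem⟩⟩ :=
      aux_ham_decomp hpHam
    have hkey : (a = y ∨ a = z) ∨ (b = y ∨ b = z) := by
      by_contra hcon
      push_neg at hcon
      obtain ⟨⟨hay, haz⟩, hby, hbz⟩ := hcon
      have hsub : ({y, z, a, b} : Set V) ⊆ G.neighborSet x := by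
        intro v hv
        rcases hv with rfl | rfl | rfl | rfl
        · exact hy
        · exact hz
        · exact hxa
        · exact hxb
      have h4 : ({y, z, a, b} : Set V).ncard = 4 := by
        rw [Set.ncard_insert_of_notMem (by simp [hyz, hay.symm, hby.symm]) (Set.toFinite _),
          Set.ncard_insert_of_notMem (by simp [haz.symm, hbz.symm]) (Set.toFinite _),
          Set.ncard_insert_of_notMem (by simp [hab]) (Set.toFinite _),
          Set.ncard_singleton]
      have h5 := Set.ncard_le_ncard hsub (Set.toFinite _)
      rw [hx, h4] at h5
      omega
    obtain ⟨b', hb'yz, w, hwpath, hwmem⟩ : ∃ b', (b' = y ∨ b' = z) ∧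
        ∃ w : G.Walk x b', w.IsPath ∧ ∀ v, v ∈ w.support := by
      rcases hkey with h | h
      · exact ⟨a, h, wa, hwa, fun v => hwamem v (hallmem v)⟩
      · exact ⟨b, h, wb, hwb, fun v => hwbmem v (hallmem v)⟩
    exact build_forward G x y z c b' hb'yz w hwpath hwmem
  · rintro ⟨p, hpath, hlen, hnb⟩
    exact build_backward G x y z c hy hz hn4 p hpath hlen hnb
end
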